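/- arXiv:2110.11761 — 2 statements merged into one kernel-verified Lean document; each statement's English description precedes it below -/
import Mathlib

section
/- Let C ∈ ℝ and ε ∈ {+1, −1}. Let H : (0,∞) → ℝ be twice differentiable and satisfy the Riccati equation r·H'(r) + H(r) − H(r)² = C·r² for all r > 0, and let K : (0,∞) → ℝ be any differentiable function such that 1 − K(r)² + r·H'(r) − H(r) > 0 for all r > 0. Define M(r) := ε·√(1 − K(r)² + r·H'(r) − H(r)) and L(r) := −ε·(r·K'(r) − K(r)² + 1 + r·H'(r) − (K(r)+1)·H(r)) / √(1 − K(r)² + r·H'(r) − H(r)). Then the quadruple (K, L, M, H) satisfies the spherically symmetric Bogomol'nyi ODE system on (0,∞). -/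
/-- The spherically symmetric Bogomol'nyi ODE system for functions
`K L M H : ℝ → ℝ`, required for all `r > 0`:
(I)   r·K'(r) + M(r)·(L(r)+M(r)) = K(r)·H(r);
(II)  −r·K'(r) + K(r)² − 1 − L(r)·M(r) = r·H'(r) − H(r) − K(r)·H(r);
(III) r·M'(r) − K(r)·(L(r)+M(r)) = M(r)·H(r). -/
def BogomolnyiSystem (K L M H : ℝ → ℝ) : Prop :=
  ∀ r > (0 : ℝ),
    r * deriv K r + M r * (L r + M r) = K r * H r ∧
    -(r * deriv K r) + (K r) ^ 2 - 1 - L r * M r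
      = r * deriv H r - H r - K r * H r ∧
    r * deriv M r - K r * (L r + M r) = M r * H r

theorem general_solution_satisfies_bogomolnyi
    (C ε : ℝ) (hε : ε = 1 ∨ ε = -1) (K L M H : ℝ → ℝ)
    (hH : ∀ r > (0 : ℝ), DifferentiableAt ℝ H r)
    (hH' : ∀ r > (0 : ℝ), DifferentiableAt ℝ (deriv H) r)
    (hRiccati : ∀ r > (0 : ℝ), r * deriv H r + H r - (H r) ^ 2 = C * r ^ 2)
    (hK : ∀ r > (0 : ℝ), DifferentiableAt ℝ K r)
    (hpos : ∀ r > (0 : ℝ), 0 < 1 - (K r) ^ 2 + r * deriv H r - H r)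
    (hM : ∀ r > (0 : ℝ),
      M r = ε * Real.sqrt (1 - (K r) ^ 2 + r * deriv H r - H r))
    (hL : ∀ r > (0 : ℝ),
      L r = -ε * (r * deriv K r - (K r) ^ 2 + 1 + r * deriv H r
        - (K r + 1) * H r) / Real.sqrt (1 - (K r) ^ 2 + r * deriv H r - H r)) :
    BogomolnyiSystem K L M H := by
  intro r hr
  have hε2 : ε ^ 2 = 1 := by rcases hε with h | h <;> simp [h]
  set k := K r with hk
  set k' := deriv K r with hk'
  set h := H r with hh
  set h' := deriv H r with hh'
  set h'' := deriv (deriv H) r with hh''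
  have hs : 0 < 1 - k ^ 2 + r * h' - h := hpos r hr
  set s : ℝ := 1 - k ^ 2 + r * h' - h with hsdef
  set q : ℝ := Real.sqrt s with hqdef
  have hq : 0 < q := Real.sqrt_pos.mpr hs
  have hq2 : q ^ 2 = s := Real.sq_sqrt hs.le
  have hMr : M r = ε * q := hM r hr
  have hLr : L r = -ε * (r * k' - k ^ 2 + 1 + r * h' - (k + 1) * h) / q := hL r hr
  -- derivative of M
  have hder_inner : HasDerivAt (fun x => 1 - K x ^ 2 + x * deriv H x - H x)
      (-(2 * k * k') + (h' + r * h'') - h') r := by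
    have h1 : HasDerivAt (fun x => K x ^ 2) (2 * k * k') r := by
      have := ((hK r hr).hasDerivAt.fun_pow 2)
      simpa [hk, hk', mul_comm, mul_assoc, mul_left_comm] using this
    have h2 : HasDerivAt (fun x => x * deriv H x) (1 * h' + r * h'') r :=
      (hasDerivAt_id r).mul (hH' r hr).hasDerivAt
    have h3 : HasDerivAt (fun x => H x) h' r := (hH r hr).hasDerivAt
    have := ((hasDerivAt_const r (1 : ℝ)).fun_sub h1).fun_add h2 |>.fun_sub h3
    simpa [one_mul] using this
  have hsne : s ≠ 0 := hs.ne'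
  have hder_sqrt : HasDerivAt (fun x => Real.sqrt (1 - K x ^ 2 + x * deriv H x - H x))
      ((1 / (2 * q)) * (-(2 * k * k') + (h' + r * h'') - h')) r := by
    have := (Real.hasDerivAt_sqrt hsne).comp r hder_inner
    simpa [hqdef, Function.comp_def] using this
  have hder_g : HasDerivAt (fun x => ε * Real.sqrt (1 - K x ^ 2 + x * deriv H x - H x))
      (ε * ((1 / (2 * q)) * (-(2 * k * k') + (h' + r * h'') - h'))) r :=
    hder_sqrt.const_mul ε
  have hMeq : M =ᶠ[nhds r] fun x => ε * Real.sqrt (1 - K x ^ 2 + x * deriv H x - H x) := by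
    filter_upwards [Ioi_mem_nhds hr] with x hx
    exact hM x hx
  have hderivM : deriv M r = ε * ((1 / (2 * q)) * (-(2 * k * k') + (h' + r * h'') - h')) := by
    rw [hMeq.deriv_eq]
    exact hder_g.deriv
  -- differentiated Riccati
  have hRicD : 2 * h' + r * h'' - 2 * h * h' = 2 * C * r := by
    have hG : HasDerivAt (fun x => x * deriv H x + H x - H x ^ 2)
        ((1 * h' + r * h'') + h' - 2 * h * h') r := by
      have h2 : HasDerivAt (fun x => x * deriv H x) (1 * h' + r * h'') r :=
        (hasDerivAt_id r).mul (hH' r hr).hasDerivAt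
      have h3 : HasDerivAt H h' r := (hH r hr).hasDerivAt
      have h4 : HasDerivAt (fun x => H x ^ 2) (2 * h * h') r := by
        have := (hH r hr).hasDerivAt.fun_pow 2
        simpa [hh, hh', mul_comm, mul_assoc, mul_left_comm] using this
      exact (h2.add h3).sub h4
    have heq : (fun x => x * deriv H x + H x - H x ^ 2) =ᶠ[nhds r]
        fun x => C * x ^ 2 := by
      filter_upwards [Ioi_mem_nhds hr] with x hx
      have := hRiccati x hx
      linarith
    have hG' : HasDerivAt (fun x => C * x ^ 2) ((1 * h' + r * h'') + h' - 2 * h * h') r :=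
      (heq.hasDerivAt_iff).mp hG
    have hG'' : HasDerivAt (fun x => C * x ^ 2) (C * (2 * r)) r := by
      simpa using ((hasDerivAt_pow 2 r).const_mul C)
    have := hG'.unique hG''
    linarith [this]
  have hRic : r * h' + h - h ^ 2 = C * r ^ 2 := hRiccati r hr
  have hRic2 : r * (r * h'') = 2 * r * h * h' + 2 * h - 2 * h ^ 2 := by
    have h1 : r * (2 * h' + r * h'' - 2 * h * h') = r * (2 * C * r) := by rw [hRicD]
    nlinarith [h1, hRic]
  have hqne : q ≠ 0 := hq.ne'
  have hML : M r * L r = -(r * k' + (1 - k ^ 2 + r * h' - h) - k * h) := by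
    rw [hMr, hLr]
    field_simp
    linear_combination (-(r * k' - k ^ 2 + 1 + r * h' - (k + 1) * h)) * hε2
  have hMM : M r * M r = 1 - k ^ 2 + r * h' - h := by
    rw [hMr]
    linear_combination q ^ 2 * hε2 + hq2
  have hMne : M r ≠ 0 := by
    rw [hMr]
    rcases hε with rfl | rfl <;> simp [hqne]
  refine ⟨?_, ?_, ?_⟩
  · have : r * k' + M r * (L r + M r)
        = r * k' + M r * L r + M r * M r := by ring
    rw [this, hML, hMM]; ring
  · rw [mul_comm (L r) (M r), hML]; ring
  · have key : r * deriv M r * M r - K r * (M r * L r) - K r * (M r * M r)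
        = (M r * M r) * H r := by
      rw [hML, hMM, hderivM, hMr]
      field_simp
      linear_combination hRic2 +
        (r * (r * h'' - 2 * k * k')) * hε2
    have key2 : M r * (r * deriv M r - K r * (L r + M r)) = M r * (M r * H r) := by
      linear_combination key
    exact mul_left_cancel₀ hMne key2
end

section
/- Let K, L, M, H : (0,∞) → ℝ satisfy the spherically symmetric Bogomol'nyi ODE system, with K, L, M differentiable and H twice differentiable, and suppose M(r) ≠ 0 for all r > 0. Then H satisfies the second-order equation r²·H''(r) − 2·r·H'(r)·H(r) − 2·H(r) + 2·H(r)² = 0 for all r > 0 (which is equation H_ξξ − H_ξ − 2H_ξH − 2H + 2H² = 0 in the logarithmic variable ξ = ln r). -/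
theorem H_second_order_equation
    (K L M H : ℝ → ℝ)
    (hK : ∀ r > (0 : ℝ), DifferentiableAt ℝ K r)
    (hL : ∀ r > (0 : ℝ), DifferentiableAt ℝ L r)
    (hM : ∀ r > (0 : ℝ), DifferentiableAt ℝ M r)
    (hH : ∀ r > (0 : ℝ), DifferentiableAt ℝ H r)
    (hH' : ∀ r > (0 : ℝ), DifferentiableAt ℝ (deriv H) r)
    (hsys : BogomolnyiSystem K L M H)
    (hMne : ∀ r > (0 : ℝ), M r ≠ 0) :
    ∀ r > (0 : ℝ),
      r ^ 2 * deriv (deriv H) r - 2 * r * deriv H r * H r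
        - 2 * H r + 2 * (H r) ^ 2 = 0 := by
  intro r hr
  obtain ⟨e1, e2, e3⟩ := hsys r hr
  have hro : Set.Ioi (0:ℝ) ∈ nhds r := isOpen_Ioi.mem_nhds hr
  have heq : (fun x => (K x)^2 + (M x)^2)
      =ᶠ[nhds r] (fun x => x * deriv H x - H x + 1) := by
    filter_upwards [hro] with x hx
    obtain ⟨a1, a2, a3⟩ := hsys x hx
    linarith [a1, a2]
  have hd := heq.deriv_eq
  have hdg : deriv (fun x => (K x)^2 + (M x)^2) r
      = 2 * K r * deriv K r + 2 * M r * deriv M r := by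
    have h1 := ((hK r hr).hasDerivAt.pow 2).add ((hM r hr).hasDerivAt.pow 2)
    rw [show (fun x => (K x)^2 + (M x)^2) = K ^ 2 + M ^ 2 from rfl, h1.deriv]
    ring
  have hdf : deriv (fun x => x * deriv H x - H x + 1) r
      = r * deriv (deriv H) r := by
    have h1 : HasDerivAt (fun x => x * deriv H x)
        (1 * deriv H r + r * deriv (deriv H) r) r :=
      (hasDerivAt_id r).mul (hH' r hr).hasDerivAt
    have h2 := ((h1.sub (hH r hr).hasDerivAt).add_const 1).deriv
    rw [show (fun x => x * deriv H x - H x + 1) = (fun x => ((fun x => x * deriv H x) - H) x + 1) from rfl, h2]; ring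
  have key : 2 * K r * deriv K r + 2 * M r * deriv M r = r * deriv (deriv H) r := by
    rw [← hdg, ← hdf, hd]
  have hval : (K r)^2 + (M r)^2 = r * deriv H r - H r + 1 := heq.self_of_nhds
  have key' : r * (2 * K r * deriv K r + 2 * M r * deriv M r)
      = r * (r * deriv (deriv H) r) := by rw [key]
  linear_combination -key' + 2 * K r * e1 + 2 * M r * e3 + 2 * H r * hval
end
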